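/- (Zadrozny's sample selection bias correction.) Let (x, y, s) be random variables on a countable (or finite) space, where s ∈ {0,1} indicates selection, with joint probability P. Assume P(s = 1 | x, y) = P(s = 1 | x) for all (x, y), that P(s = 1 | x) > 0 for all x with P(x) > 0, and that P(s = 1) > 0. Define the importance weight w(x) = P(s = 1)/P(s = 1 | x). Then for any hypothesis h and loss ℓ, E[w(x) ℓ(h(x), y) | s = 1] = E[ℓ(h(x), y)]; i.e., importance weighting by w corrects the sample selection bias. -/

import Mathlib

open MeasureTheory ProbabilityTheory
open scoped ProbabilityTheory ENNReal

private lemma zadrozny_aux_bound (Ps Px Pxs Pxys oC : ℝ≥0∞) (L : ℝ)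
    (hPs0 : Ps ≠ 0) (hPsT : Ps ≠ ∞) (hPxT : Px ≠ ∞) (hxs : Pxs ≠ 0)
    (hL : (‖L‖₊ : ℝ≥0∞) ≤ oC) :
    (‖Ps.toReal * Px.toReal / Pxs.toReal * L‖₊ : ℝ≥0∞) * (Ps⁻¹ * Pxys)
      ≤ oC * (Px / Pxs * Pxys) := by
  have hW : (‖Ps.toReal * Px.toReal / Pxs.toReal‖₊ : ℝ≥0∞) = Ps * Px / Pxs := by
    have hne : Ps * Px / Pxs ≠ ∞ := (ENNReal.div_lt_top (ENNReal.mul_ne_top hPsT hPxT) hxs).ne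
    rw [← ENNReal.toReal_mul, ← ENNReal.toReal_div,
      ← enorm_eq_nnnorm, Real.enorm_eq_ofReal ENNReal.toReal_nonneg, ENNReal.ofReal_toReal hne]
  calc (‖Ps.toReal * Px.toReal / Pxs.toReal * L‖₊ : ℝ≥0∞) * (Ps⁻¹ * Pxys)
      = (Ps * Px / Pxs) * (‖L‖₊ : ℝ≥0∞) * (Ps⁻¹ * Pxys) := by
        rw [nnnorm_mul, ENNReal.coe_mul, hW]
    _ ≤ (Ps * Px / Pxs) * oC * (Ps⁻¹ * Pxys) :=
        by gcongr
    _ = (Ps * Ps⁻¹) * (oC * (Px / Pxs * Pxys)) := by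
        rw [div_eq_mul_inv, div_eq_mul_inv]; ring
    _ = oC * (Px / Pxs * Pxys) := by rw [ENNReal.mul_inv_cancel hPs0 hPsT, one_mul]

private lemma zadrozny_aux_term (s x q u v L : ℝ) (hq : q ≠ 0) (hs : s ≠ 0)
    (hsel : u * x = q * v) : s⁻¹ * u * (s * x / q * L) = v * L := by
  field_simp
  linear_combination L * hsel

/-- Zadrozny's sample selection bias correction: on a countable space, if selection depends only
on `x` (`P(s=1|x,y) = P(s=1|x)`, stated in cleared form), `P(s=1|x) > 0` wherever `P(x) > 0`, and
`P(s=1) > 0`, then with the importance weight `w(x) = P(s=1)/P(s=1|x) = P(s=1)·P(x)/P(x, s=1)`,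
for any hypothesis `h` and bounded measurable loss `ℓ`,
`E[w(x) ℓ(h(x), y) | s = 1] = E[ℓ(h(x), y)]`. -/
theorem zadrozny_sample_selection_bias_correction
    {X Y : Type*} [MeasurableSpace X] [MeasurableSingletonClass X] [Countable X]
    [MeasurableSpace Y] [MeasurableSingletonClass Y] [Countable Y]
    (P : Measure (X × Y × Bool)) [IsProbabilityMeasure P]
    (hsel : ∀ (a : X) (b : Y),
      P {z | z.1 = a ∧ z.2.1 = b ∧ z.2.2 = true} * P {z | z.1 = a}
        = P {z | z.1 = a ∧ z.2.2 = true} * P {z | z.1 = a ∧ z.2.1 = b})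
    (hpos : ∀ a : X, 0 < P {z | z.1 = a} → 0 < P {z | z.1 = a ∧ z.2.2 = true})
    (hs : 0 < P {z | z.2.2 = true})
    (h : X → ℝ) (hh : Measurable h)
    (ℓ : ℝ × Y → ℝ) (hℓ : Measurable ℓ) (C : ℝ) (hC : ∀ z, |ℓ z| ≤ C) :
    ∫ z : X × Y × Bool,
        ((P {w | w.2.2 = true}).toReal * (P {w | w.1 = z.1}).toReal
            / (P {w | w.1 = z.1 ∧ w.2.2 = true}).toReal) * ℓ (h z.1, z.2.1)
        ∂(P[|{w | w.2.2 = true}])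
      = ∫ z : X × Y × Bool, ℓ (h z.1, z.2.1) ∂P := by
  classical
  have hmZ : ∀ s : Set (X × Y × Bool), MeasurableSet s := fun s => s.to_countable.measurableSet
  have hmP : ∀ s : Set (X × Y), MeasurableSet s := fun s => s.to_countable.measurableSet
  have hπm : Measurable (fun z : X × Y × Bool => (z.1, z.2.1)) := measurable_of_countable _
  have hPsne : P {w : X × Y × Bool | w.2.2 = true} ≠ 0 := hs.ne'
  have hPsfin : P {w : X × Y × Bool | w.2.2 = true} ≠ ∞ := measure_ne_top _ _
  haveI hprob : IsProbabilityMeasure (P[|{w : X × Y × Bool | w.2.2 = true}]) :=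
    cond_isProbabilityMeasure hPsne
  haveI : IsProbabilityMeasure (P.map (fun z : X × Y × Bool => (z.1, z.2.1))) :=
    Measure.isProbabilityMeasure_map hπm.aemeasurable
  haveI : IsProbabilityMeasure
      ((P[|{w : X × Y × Bool | w.2.2 = true}]).map (fun z : X × Y × Bool => (z.1, z.2.1))) :=
    Measure.isProbabilityMeasure_map hπm.aemeasurable
  -- measures of singletons under the mapped measures
  have hpre : ∀ p : X × Y, (fun z : X × Y × Bool => (z.1, z.2.1)) ⁻¹' {p}
      = {z | z.1 = p.1 ∧ z.2.1 = p.2} := by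
    intro p; ext z; simp [Prod.ext_iff]
  have hν : ∀ p : X × Y,
      ((P[|{w : X × Y × Bool | w.2.2 = true}]).map (fun z : X × Y × Bool => (z.1, z.2.1))) {p}
        = (P {w : X × Y × Bool | w.2.2 = true})⁻¹
            * P {z : X × Y × Bool | z.1 = p.1 ∧ z.2.1 = p.2 ∧ z.2.2 = true} := by
    intro p
    rw [Measure.map_apply hπm (hmP _), hpre, cond_apply (hmZ _)]
    have hset : {w : X × Y × Bool | w.2.2 = true} ∩ {z : X × Y × Bool | z.1 = p.1 ∧ z.2.1 = p.2}
        = {z : X × Y × Bool | z.1 = p.1 ∧ z.2.1 = p.2 ∧ z.2.2 = true} := by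
      ext z; simp only [Set.mem_inter_iff, Set.mem_setOf_eq]; tauto
    rw [hset]
  have hνP : ∀ p : X × Y, (P.map (fun z : X × Y × Bool => (z.1, z.2.1))) {p}
      = P {z : X × Y × Bool | z.1 = p.1 ∧ z.2.1 = p.2} := by
    intro p; rw [Measure.map_apply hπm (hmP _), hpre]
  -- fiber decomposition and total mass
  have hfiber : ∀ a : X, ∑' b : Y, P {z : X × Y × Bool | z.1 = a ∧ z.2.1 = b ∧ z.2.2 = true}
      = P {z : X × Y × Bool | z.1 = a ∧ z.2.2 = true} := by
    intro a
    have hU : {z : X × Y × Bool | z.1 = a ∧ z.2.2 = true}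
        = ⋃ b : Y, {z | z.1 = a ∧ z.2.1 = b ∧ z.2.2 = true} := by ext z; simp
    rw [hU, measure_iUnion ?_ fun _ => hmZ _]
    intro b b' hbb'
    simp only [Function.onFun, Set.disjoint_left]
    rintro z ⟨-, h1, -⟩ ⟨-, h2, -⟩
    exact hbb' (h1 ▸ h2 ▸ rfl)
  have htot : ∑' a : X, P {z : X × Y × Bool | z.1 = a} = 1 := by
    have hU : (Set.univ : Set (X × Y × Bool)) = ⋃ a : X, {z | z.1 = a} := by ext z; simp
    rw [← measure_univ (μ := P), hU, measure_iUnion ?_ fun _ => hmZ _]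
    intro a a' haa'
    simp only [Function.onFun, Set.disjoint_left]
    rintro z h1 h2
    exact haa' (h1 ▸ h2 ▸ rfl)
  -- integrability of the plain loss over the mapped measure
  have hRm : Measurable (fun p : X × Y => ℓ (h p.1, p.2)) := measurable_of_countable _
  have hRint : Integrable (fun p : X × Y => ℓ (h p.1, p.2))
      (P.map (fun z : X × Y × Bool => (z.1, z.2.1))) := by
    refine (integrable_const C).mono' hRm.aestronglyMeasurable (ae_of_all _ fun p => ?_)
    simpa [Real.norm_eq_abs] using hC (h p.1, p.2)
  -- integrability of the weighted loss over the conditional mapped measure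
  have hGm : Measurable (fun p : X × Y =>
      (P {w : X × Y × Bool | w.2.2 = true}).toReal * (P {w : X × Y × Bool | w.1 = p.1}).toReal
        / (P {w : X × Y × Bool | w.1 = p.1 ∧ w.2.2 = true}).toReal * ℓ (h p.1, p.2)) :=
    measurable_of_countable _
  have hbound : ∀ p : X × Y,
      (‖(P {w : X × Y × Bool | w.2.2 = true}).toReal
          * (P {w : X × Y × Bool | w.1 = p.1}).toReal
          / (P {w : X × Y × Bool | w.1 = p.1 ∧ w.2.2 = true}).toReal * ℓ (h p.1, p.2)‖₊ : ℝ≥0∞)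
        * ((P[|{w : X × Y × Bool | w.2.2 = true}]).map (fun z : X × Y × Bool => (z.1, z.2.1))) {p}
      ≤ ENNReal.ofReal C * (P {w : X × Y × Bool | w.1 = p.1}
          / P {w : X × Y × Bool | w.1 = p.1 ∧ w.2.2 = true}
          * P {z : X × Y × Bool | z.1 = p.1 ∧ z.2.1 = p.2 ∧ z.2.2 = true}) := by
    intro p
    rw [hν p]
    by_cases hx : P {w : X × Y × Bool | w.1 = p.1} = 0
    · have h1 : P {z : X × Y × Bool | z.1 = p.1 ∧ z.2.1 = p.2 ∧ z.2.2 = true} = 0 :=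
        measure_mono_null (fun z hz => hz.1) hx
      rw [h1, mul_zero, mul_zero]
      exact zero_le
    · have hxs : P {w : X × Y × Bool | w.1 = p.1 ∧ w.2.2 = true} ≠ 0 :=
        (hpos p.1 (pos_iff_ne_zero.2 hx)).ne'
      refine zadrozny_aux_bound _ _ _ _ _ _ hPsne hPsfin (measure_ne_top _ _) hxs ?_
      rw [← enorm_eq_nnnorm, ← ofReal_norm]
      exact ENNReal.ofReal_le_ofReal ((Real.norm_eq_abs _).le.trans (hC (h p.1, p.2)))
  have hGint : Integrable (fun p : X × Y =>
      (P {w : X × Y × Bool | w.2.2 = true}).toReal * (P {w : X × Y × Bool | w.1 = p.1}).toReal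
        / (P {w : X × Y × Bool | w.1 = p.1 ∧ w.2.2 = true}).toReal * ℓ (h p.1, p.2))
      ((P[|{w : X × Y × Bool | w.2.2 = true}]).map (fun z : X × Y × Bool => (z.1, z.2.1))) := by
    refine ⟨hGm.aestronglyMeasurable, ?_⟩
    simp only [HasFiniteIntegral]
    rw [lintegral_countable']
    calc ∑' p : X × Y, (‖(P {w : X × Y × Bool | w.2.2 = true}).toReal
            * (P {w : X × Y × Bool | w.1 = p.1}).toReal
            / (P {w : X × Y × Bool | w.1 = p.1 ∧ w.2.2 = true}).toReal * ℓ (h p.1, p.2)‖₊ : ℝ≥0∞)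
          * ((P[|{w : X × Y × Bool | w.2.2 = true}]).map
              (fun z : X × Y × Bool => (z.1, z.2.1))) {p}
        ≤ ∑' p : X × Y, ENNReal.ofReal C * (P {w : X × Y × Bool | w.1 = p.1}
            / P {w : X × Y × Bool | w.1 = p.1 ∧ w.2.2 = true}
            * P {z : X × Y × Bool | z.1 = p.1 ∧ z.2.1 = p.2 ∧ z.2.2 = true}) :=
          ENNReal.tsum_le_tsum hbound
      _ = ENNReal.ofReal C * ∑' p : X × Y, (P {w : X × Y × Bool | w.1 = p.1}
            / P {w : X × Y × Bool | w.1 = p.1 ∧ w.2.2 = true}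
            * P {z : X × Y × Bool | z.1 = p.1 ∧ z.2.1 = p.2 ∧ z.2.2 = true}) :=
          ENNReal.tsum_mul_left
      _ = ENNReal.ofReal C * ∑' a : X, ∑' b : Y, (P {w : X × Y × Bool | w.1 = a}
            / P {w : X × Y × Bool | w.1 = a ∧ w.2.2 = true}
            * P {z : X × Y × Bool | z.1 = a ∧ z.2.1 = b ∧ z.2.2 = true}) := by
          rw [ENNReal.tsum_prod']
      _ = ENNReal.ofReal C * ∑' a : X, P {z : X × Y × Bool | z.1 = a} := by
          congr 1
          refine tsum_congr fun a => ?_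
          rw [ENNReal.tsum_mul_left, hfiber a]
          by_cases h0 : P {w : X × Y × Bool | w.1 = a ∧ w.2.2 = true} = 0
          · have hx0 : P {w : X × Y × Bool | w.1 = a} = 0 := by
              by_contra hne
              exact (hpos a (pos_iff_ne_zero.2 hne)).ne' h0
            simp [h0, hx0]
          · exact ENNReal.div_mul_cancel h0 (measure_ne_top _ _)
      _ = ENNReal.ofReal C := by rw [htot, mul_one]
      _ < ∞ := ENNReal.ofReal_lt_top
  -- termwise identity
  have hterm : ∀ p : X × Y,
      ((P {w : X × Y × Bool | w.2.2 = true})⁻¹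
          * P {z : X × Y × Bool | z.1 = p.1 ∧ z.2.1 = p.2 ∧ z.2.2 = true}).toReal
        * ((P {w : X × Y × Bool | w.2.2 = true}).toReal
            * (P {w : X × Y × Bool | w.1 = p.1}).toReal
            / (P {w : X × Y × Bool | w.1 = p.1 ∧ w.2.2 = true}).toReal * ℓ (h p.1, p.2))
      = (P {z : X × Y × Bool | z.1 = p.1 ∧ z.2.1 = p.2}).toReal * ℓ (h p.1, p.2) := by
    intro p
    by_cases hx : P {w : X × Y × Bool | w.1 = p.1} = 0
    · have h1 : P {z : X × Y × Bool | z.1 = p.1 ∧ z.2.1 = p.2 ∧ z.2.2 = true} = 0 :=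
        measure_mono_null (fun z hz => hz.1) hx
      have h2 : P {z : X × Y × Bool | z.1 = p.1 ∧ z.2.1 = p.2} = 0 :=
        measure_mono_null (fun z hz => hz.1) hx
      simp [h1, h2]
    · have hxs : P {w : X × Y × Bool | w.1 = p.1 ∧ w.2.2 = true} ≠ 0 :=
        (hpos p.1 (pos_iff_ne_zero.2 hx)).ne'
      have hselR : (P {z : X × Y × Bool | z.1 = p.1 ∧ z.2.1 = p.2 ∧ z.2.2 = true}).toReal
            * (P {w : X × Y × Bool | w.1 = p.1}).toReal
          = (P {w : X × Y × Bool | w.1 = p.1 ∧ w.2.2 = true}).toReal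
            * (P {z : X × Y × Bool | z.1 = p.1 ∧ z.2.1 = p.2}).toReal := by
        rw [← ENNReal.toReal_mul, ← ENNReal.toReal_mul, hsel p.1 p.2]
      have hq : (P {w : X × Y × Bool | w.1 = p.1 ∧ w.2.2 = true}).toReal ≠ 0 :=
        ENNReal.toReal_ne_zero.2 ⟨hxs, measure_ne_top _ _⟩
      have hsR : (P {w : X × Y × Bool | w.2.2 = true}).toReal ≠ 0 :=
        ENNReal.toReal_ne_zero.2 ⟨hPsne, hPsfin⟩
      rw [ENNReal.toReal_mul, ENNReal.toReal_inv]
      exact zadrozny_aux_term _ _ _ _ _ _ hq hsR hselR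
  -- put everything together
  calc ∫ z : X × Y × Bool,
        ((P {w | w.2.2 = true}).toReal * (P {w | w.1 = z.1}).toReal
            / (P {w | w.1 = z.1 ∧ w.2.2 = true}).toReal) * ℓ (h z.1, z.2.1)
        ∂(P[|{w | w.2.2 = true}])
      = ∫ p : X × Y, (P {w : X × Y × Bool | w.2.2 = true}).toReal
          * (P {w : X × Y × Bool | w.1 = p.1}).toReal
          / (P {w : X × Y × Bool | w.1 = p.1 ∧ w.2.2 = true}).toReal * ℓ (h p.1, p.2)
          ∂((P[|{w : X × Y × Bool | w.2.2 = true}]).map (fun z : X × Y × Bool => (z.1, z.2.1))) :=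
        (integral_map hπm.aemeasurable hGm.aestronglyMeasurable).symm
    _ = ∑' p : X × Y,
          (((P[|{w : X × Y × Bool | w.2.2 = true}]).map
              (fun z : X × Y × Bool => (z.1, z.2.1))) {p}).toReal
          • ((P {w : X × Y × Bool | w.2.2 = true}).toReal
              * (P {w : X × Y × Bool | w.1 = p.1}).toReal
              / (P {w : X × Y × Bool | w.1 = p.1 ∧ w.2.2 = true}).toReal * ℓ (h p.1, p.2)) :=
        integral_countable' hGint
    _ = ∑' p : X × Y, (P {z : X × Y × Bool | z.1 = p.1 ∧ z.2.1 = p.2}).toReal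
          * ℓ (h p.1, p.2) := by
        refine tsum_congr fun p => ?_
        rw [smul_eq_mul, hν p]
        exact hterm p
    _ = ∑' p : X × Y, ((P.map (fun z : X × Y × Bool => (z.1, z.2.1))) {p}).toReal
          • ℓ (h p.1, p.2) := by
        refine tsum_congr fun p => ?_
        rw [smul_eq_mul, hνP p]
    _ = ∫ p : X × Y, ℓ (h p.1, p.2) ∂(P.map (fun z : X × Y × Bool => (z.1, z.2.1))) :=
        (integral_countable' hRint).symm
    _ = ∫ z : X × Y × Bool, ℓ (h z.1, z.2.1) ∂P :=
        integral_map hπm.aemeasurable hRm.aestronglyMeasurable
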